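/- Let Σ be an alphabet containing two distinct symbols a and b. The language Σ*b of strings ending with b is not PTL-definable, whereas the language bΣ* of strings beginning with b is PTL-definable. -/
import Mathlib


/-- PTL formulas over alphabet `α`: atoms, conjunction, negation, and the past operator. -/
inductive PTL (α : Type*) : Type _
  | atom : α → PTL α
  | conj : PTL α → PTL α → PTL α
  | neg : PTL α → PTL α
  | past : PTL α → PTL α

/-- Satisfaction of a PTL formula in string `w` at (1-based) position `n ∈ {1,…,N+1}`. -/
def PTL.Sat {α : Type*} (w : List α) : PTL α → ℕ → Prop
  | .atom a, n => 1 ≤ n ∧ w[n - 1]? = some a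
  | .conj ψ₁ ψ₂, n => PTL.Sat w ψ₁ n ∧ PTL.Sat w ψ₂ n
  | .neg ψ, n => ¬ PTL.Sat w ψ n
  | .past ψ, n => ∃ m, 1 ≤ m ∧ m < n ∧ PTL.Sat w ψ m

/-- A string `w` of length `N` satisfies `ψ` iff `w, N+1 ⊨ ψ`. -/
def PTL.Models {α : Type*} (w : List α) (ψ : PTL α) : Prop :=
  PTL.Sat w ψ (w.length + 1)

/-- A language is PTL-definable if it is the set of strings satisfying some PTL formula. -/
def PTLDefinable {α : Type*} (L : Set (List α)) : Prop :=
  ∃ ψ : PTL α, ∀ w : List α, w ∈ L ↔ PTL.Models w ψ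

namespace PTLAux

/-- A "depth" measure for PTL formulas (threshold for the periodicity lemma). -/
def kk {α : Type*} : PTL α → ℕ
  | .atom _ => 1
  | .conj φ χ => max (kk φ) (kk χ)
  | .neg φ => kk φ
  | .past φ => kk φ + 2

lemma kk_pos {α : Type*} (ψ : PTL α) : 1 ≤ kk ψ := by
  induction ψ with
  | atom c => simp [kk]
  | conj φ χ ih1 ih2 => simp only [kk]; omega
  | neg φ ih => simpa [kk] using ih
  | past φ ih => simp only [kk]; omega

/-- Satisfaction at position `m` only depends on letters at indices `< m`. -/
lemma sat_congr {α : Type*} (w w' : List α) (ψ : PTL α) :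
    ∀ m, (∀ i < m, w[i]? = w'[i]?) → (PTL.Sat w ψ m ↔ PTL.Sat w' ψ m) := by
  induction ψ with
  | atom c =>
      intro m h
      simp only [PTL.Sat]
      constructor <;> rintro ⟨h1, h2⟩
      · exact ⟨h1, by rw [← h (m - 1) (by omega)]; exact h2⟩
      · exact ⟨h1, by rw [h (m - 1) (by omega)]; exact h2⟩
  | conj φ χ ih1 ih2 =>
      intro m h
      simp only [PTL.Sat, ih1 m h, ih2 m h]
  | neg φ ih =>
      intro m h
      simp only [PTL.Sat, ih m h]
  | past φ ih =>
      intro m h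
      simp only [PTL.Sat]
      constructor <;> rintro ⟨m', h1, h2, h3⟩
      · exact ⟨m', h1, h2, (ih m' (fun i hi => h i (by omega))).mp h3⟩
      · exact ⟨m', h1, h2, (ih m' (fun i hi => h i (by omega))).mpr h3⟩

/-- Periodicity: in a word whose letters follow a 2-periodic pattern, satisfaction
at positions `m` and `m+2` (both deep enough and inside the word) coincide. -/
lemma sat_period {α : Type*} (z : List α) (f : ℕ → α) (hf : ∀ i, f (i + 2) = f i)
    (hz : ∀ i < z.length, z[i]? = some (f i)) (ψ : PTL α) :
    ∀ m, kk ψ ≤ m → m + 2 ≤ z.length → (PTL.Sat z ψ m ↔ PTL.Sat z ψ (m + 2)) := by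
  induction ψ with
  | atom c =>
      intro m hk hm
      have h1 : (1:ℕ) ≤ m := by simpa [kk] using hk
      simp only [PTL.Sat]
      rw [hz (m - 1) (by omega), hz (m + 2 - 1) (by omega)]
      have h : m + 2 - 1 = (m - 1) + 2 := by omega
      rw [h, hf]
      constructor <;> rintro ⟨_, h⟩
      · exact ⟨by omega, h⟩
      · exact ⟨h1, h⟩
  | conj φ χ ih1 ih2 =>
      intro m hk hm
      simp only [PTL.Sat, ih1 m (le_trans (le_max_left _ _) (by simpa [kk] using hk)) hm,
        ih2 m (le_trans (le_max_right _ _) (by simpa [kk] using hk)) hm]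
  | neg φ ih =>
      intro m hk hm
      simp only [PTL.Sat, ih m (by simpa [kk] using hk) hm]
  | past φ ih =>
      intro m hk hm
      have hkφ : kk φ + 2 ≤ m := by simpa [kk] using hk
      have hpos : 1 ≤ kk φ := kk_pos φ
      simp only [PTL.Sat]
      constructor
      · rintro ⟨m', h1, h2, h3⟩
        exact ⟨m', h1, by omega, h3⟩
      · rintro ⟨m', h1, h2, h3⟩
        by_cases hlt : m' < m
        · exact ⟨m', h1, hlt, h3⟩
        · -- m' ∈ {m, m+1}; shift down by 2
          have h4 := ih (m' - 2) (by omega) (by omega)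
          rw [show m' - 2 + 2 = m' from by omega] at h4
          exact ⟨m' - 2, by omega, by omega, h4.mpr h3⟩

/-- The 2-periodic pattern `a b a b …`. -/
noncomputable def altf {α : Type*} (a b : α) : ℕ → α := fun i => if i % 2 = 0 then a else b

lemma altf_period {α : Type*} (a b : α) : ∀ i, altf a b (i + 2) = altf a b i := by
  intro i
  simp only [altf, Nat.add_mod_right]

end PTLAux

open PTLAux in
/-- The language `Σ*b` of strings ending with `b` is not PTL-definable,
whereas the language `bΣ*` of strings beginning with `b` is PTL-definable. -/
theorem last_not_ptl_first_ptl {α : Type*} [Fintype α] (a b : α) (hab : a ≠ b) :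
    ¬ PTLDefinable {w : List α | ∃ u : List α, w = u ++ [b]} ∧
      PTLDefinable {w : List α | ∃ u : List α, w = b :: u} := by
  constructor
  · -- Σ*b is not PTL-definable
    rintro ⟨ψ, hψ⟩
    set n : ℕ := kk ψ + 2 with hn
    -- y = (ab)^n a, x = (ab)^n
    set y : List α := (List.range (2 * n + 1)).map (altf a b) with hy
    set x : List α := (List.range (2 * n)).map (altf a b) with hx
    have hylen : y.length = 2 * n + 1 := by simp [hy]
    have hxlen : x.length = 2 * n := by simp [hx]
    have hyget : ∀ i < 2 * n + 1, y[i]? = some (altf a b i) := by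
      intro i hi
      simp [hy, List.getElem?_map, List.getElem?_range hi]
    have hxget : ∀ i < 2 * n, x[i]? = some (altf a b i) := by
      intro i hi
      simp [hx, List.getElem?_map, List.getElem?_range hi]
    -- x and y agree on indices < 2n
    have hagree : ∀ i < 2 * n, x[i]? = y[i]? := by
      intro i hi
      rw [hxget i hi, hyget i (by omega)]
    -- Key: Sat x φ (2n+1) ↔ Sat y φ (2n+2) for subformulas with kk ≤ 2n-1
    have key : ∀ φ : PTL α, kk φ ≤ 2 * n - 1 →
        (PTL.Sat x φ (2 * n + 1) ↔ PTL.Sat y φ (2 * n + 2)) := by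
      intro φ
      induction φ with
      | atom c =>
          intro _
          simp only [PTL.Sat]
          have h1 : x[2 * n + 1 - 1]? = none := by
            rw [List.getElem?_eq_none]
            omega
          have h2 : y[2 * n + 2 - 1]? = none := by
            rw [List.getElem?_eq_none]
            omega
          rw [h1, h2]
          simp
      | conj φ₁ φ₂ ih1 ih2 =>
          intro hk
          have k1 : kk φ₁ ≤ 2 * n - 1 := le_trans (le_max_left _ _) (by simpa [kk] using hk)
          have k2 : kk φ₂ ≤ 2 * n - 1 := le_trans (le_max_right _ _) (by simpa [kk] using hk)
          simp only [PTL.Sat, ih1 k1, ih2 k2]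
      | neg φ ih =>
          intro hk
          simp only [PTL.Sat, ih (by simpa [kk] using hk)]
      | past φ ih =>
          intro hk
          have hkφ : kk φ + 2 ≤ 2 * n - 1 := by simpa [kk] using hk
          have hpos : 1 ≤ kk φ := kk_pos φ
          simp only [PTL.Sat]
          constructor
          · rintro ⟨m, h1, h2, h3⟩
            refine ⟨m, h1, by omega, ?_⟩
            exact (sat_congr x y φ m (fun i hi => hagree i (by omega))).mp h3
          · rintro ⟨m, h1, h2, h3⟩
            by_cases hm : m ≤ 2 * n
            · refine ⟨m, h1, by omega, ?_⟩
              exact (sat_congr x y φ m (fun i hi => hagree i (by omega))).mpr h3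
            · -- m = 2n+1: use periodicity to move down to 2n-1
              have hm' : m = 2 * n + 1 := by omega
              subst hm'
              have hper := sat_period y (altf a b) (altf_period a b)
                (fun i hi => hyget i (by omega)) φ (2 * n - 1) (by omega) (by omega)
              rw [show 2 * n - 1 + 2 = 2 * n + 1 from by omega] at hper
              have h4 : PTL.Sat y φ (2 * n - 1) := hper.mpr h3
              refine ⟨2 * n - 1, by omega, by omega, ?_⟩
              exact (sat_congr x y φ (2 * n - 1) (fun i hi => hagree i (by omega))).mpr h4
    -- x ends with b
    have hmod : (2 * n - 1) % 2 = 1 := by omega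
    have hxend : x ∈ {w : List α | ∃ u : List α, w = u ++ [b]} := by
      refine ⟨(List.range (2 * n - 1)).map (altf a b), ?_⟩
      rw [hx, show 2 * n = (2 * n - 1) + 1 from by omega, List.range_succ, List.map_append]
      simp [altf, hmod]
    -- y = x ++ [a]
    have hysplit : y = x ++ [a] := by
      rw [hy, hx, List.range_succ, List.map_append]
      simp [altf]
    have hyend : y ∉ {w : List α | ∃ u : List α, w = u ++ [b]} := by
      rintro ⟨u, hu⟩
      rw [hysplit] at hu
      have := (List.append_inj' hu rfl).2
      simp only [List.cons.injEq] at this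
      exact hab this.1
    -- Contradiction
    have hxm : PTL.Models x ψ := (hψ x).mp hxend
    have hym : ¬ PTL.Models y ψ := fun h => hyend ((hψ y).mpr h)
    apply hym
    unfold PTL.Models at hxm ⊢
    rw [hylen]
    rw [hxlen] at hxm
    exact (key ψ (by omega)).mp hxm
  · -- bΣ* is PTL-definable via P(π_b ∧ ¬P⊤) where ⊤ := ¬(π_b ∧ ¬π_b)
    refine ⟨.past (.conj (.atom b) (.neg (.past (.neg (.conj (.atom b) (.neg (.atom b))))))),
      fun w => ?_⟩
    simp only [Set.mem_setOf_eq, PTL.Models, PTL.Sat]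
    constructor
    · rintro ⟨u, rfl⟩
      refine ⟨1, le_refl 1, by simp, ⟨le_refl 1, by simp⟩, ?_⟩
      rintro ⟨m, h1, h2, -⟩
      omega
    · rintro ⟨m, h1, h2, ⟨-, h5⟩, h4⟩
      have hm1 : m = 1 := by
        by_contra h
        exact h4 ⟨1, le_refl 1, by omega, fun hc => hc.2 ⟨le_refl 1, hc.1.2⟩⟩
      subst hm1
      simp only [Nat.sub_self] at h5
      cases w with
      | nil => simp at h5
      | cons c u =>
          simp only [List.getElem?_cons_zero, Option.some_inj] at h5
          exact ⟨u, by rw [h5]⟩
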